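/- arXiv:2304.02567 — 2 statements merged into one kernel-verified Lean document; each statement's English description precedes it below -/
import Mathlib

section
/- The sequence of binomial coefficients satisfies: for fixed p ∈ (0,1) with pn an integer, C(n, pn) = exp(n·H(p)) / √(2π·p·(1-p)·n) · (1 + O(1/n)) as n → ∞. More precisely, for every p ∈ (0,1) and n with pn ∈ ℕ: 1 - (1 - p(1-p))/(12·p·(1-p)·n) < C(n,pn) / ( exp(n·H(p)) / √(2π·p·(1-p)·n) ) < 1. -/
open Real
open Filter Stirling Finset
open scoped Topology
set_option maxHeartbeats 1000000

lemma bsb_diff_ge (m : ℕ) : (1/(2*(m+1:ℝ)+1))^2 / 3 ≤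
    Real.log (stirlingSeq (m+1)) - Real.log (stirlingSeq (m+2)) := by
  have h := Stirling.log_stirlingSeq_diff_hasSum m
  have h0 := le_hasSum h 0 (fun j _ => by positivity)
  norm_num at h0 ⊢
  convert h0 using 1
  · rfl
  · ring

lemma bsb_diff_le (m : ℕ) : Real.log (stirlingSeq (m+1)) - Real.log (stirlingSeq (m+2)) ≤
    (1/(2*(m+1:ℝ)+1))^2 / (3 * (1 - (1/(2*(m+1:ℝ)+1))^2)) := by
  have htpos : (0:ℝ) < 1/(2*(m+1:ℝ)+1) := by positivity
  have ht1 : (1/(2*(m+1:ℝ)+1))^2 < 1 := by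
    rw [div_pow, one_pow, div_lt_one (by positivity)]
    nlinarith [Nat.cast_nonneg (α := ℝ) m]
  have g : HasSum (fun j : ℕ => (1/3 : ℝ) * ((1/(2*(m+1:ℝ)+1))^2)^(j+1))
      (1/3 * ((1/(2*(m+1:ℝ)+1))^2 * (1 - (1/(2*(m+1:ℝ)+1))^2)⁻¹)) := by
    have := (hasSum_geometric_of_lt_one (sq_nonneg (1/(2*(m+1:ℝ)+1))) ht1).mul_left
      ((1/3 : ℝ) * (1/(2*(m+1:ℝ)+1))^2)
    convert this using 1
    · rfl
    · funext j; ring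
    · ring
  have hab : ∀ j : ℕ, (1 : ℝ) / (2 * ↑(j + 1) + 1) * ((1 / (2 * ↑(m + 1) + 1)) ^ 2) ^ (j + 1)
      ≤ (1/3 : ℝ) * ((1/(2*(m+1:ℝ)+1))^2)^(j+1) := by
    intro j
    have hA : (0:ℝ) ≤ ((1 / (2 * ((m:ℝ) + 1) + 1)) ^ 2) ^ (j + 1) := by positivity
    have h1 : (1 : ℝ) / (2 * ((j:ℝ) + 1) + 1) ≤ 1/3 := by
      rw [div_le_div_iff₀ (by positivity) (by norm_num)]
      linarith [Nat.cast_nonneg (α := ℝ) j]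
    push_cast
    exact mul_le_mul_of_nonneg_right h1 hA
  have hle := hasSum_le hab (Stirling.log_stirlingSeq_diff_hasSum m) g
  refine hle.trans (le_of_eq ?_)
  have h1t : (1 - (1/(2*(m+1:ℝ)+1))^2) ≠ 0 := by nlinarith
  field_simp

lemma bsb_tendsto_log :
    Tendsto (fun m : ℕ => Real.log (stirlingSeq (m+1))) atTop (𝓝 (Real.log (Real.sqrt π))) := by
  have h : Tendsto (fun m : ℕ => stirlingSeq (m+1)) atTop (𝓝 (Real.sqrt π)) :=
    tendsto_stirlingSeq_sqrt_pi.comp (tendsto_add_atTop_nat 1)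
  exact (Real.continuousAt_log (by positivity)).tendsto.comp h

lemma bsb_aux_tendsto (c : ℝ) (hc : 0 ≤ c) :
    Tendsto (fun i : ℕ => 1/(12*((i:ℝ)+1)+c)) atTop (𝓝 0) := by
  have hpos : ∀ i : ℕ, (0:ℝ) < 12*((i:ℝ)+1)+c := by
    intro i
    have hi : (0:ℝ) ≤ (i:ℝ) := Nat.cast_nonneg i
    linarith
  apply squeeze_zero (g := fun i : ℕ => 1/((i:ℝ)+1))
  · exact fun i => le_of_lt (one_div_pos.mpr (hpos i))
  · intro i
    apply one_div_le_one_div_of_le (by positivity)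
    have hi : (0:ℝ) ≤ (i:ℝ) := Nat.cast_nonneg i
    linarith
  · exact tendsto_one_div_add_atTop_nhds_zero_nat

lemma bsb_robbins_up (m : ℕ) : Real.log (stirlingSeq (m+1)) ≤
    Real.log (Real.sqrt π) + 1/(12*((m:ℝ)+1)) := by
  have hmono : Monotone (fun i : ℕ => Real.log (stirlingSeq (i+1)) - 1/(12*((i:ℝ)+1))) := by
    apply monotone_nat_of_le_succ
    intro i
    have hd := bsb_diff_le i
    have hM : (0:ℝ) ≤ (i:ℝ) := Nat.cast_nonneg i
    have ht : (1/(2*((i:ℝ)+1)+1))^2 * (2*((i:ℝ)+1)+1)^2 = 1 := by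
      field_simp
    have ht1 : (1/(2*((i:ℝ)+1)+1))^2 < 1 := by nlinarith
    have heq : (1/(2*((i:ℝ)+1)+1))^2 / (3 * (1 - (1/(2*((i:ℝ)+1)+1))^2))
        ≤ 1/(12*((i:ℝ)+1)) - 1/(12*((i:ℝ)+1+1)) := by
      rw [div_sub_div _ _ (by positivity) (by positivity),
        div_le_div_iff₀ (by nlinarith) (by positivity)]
      nlinarith [ht, hM]
    have hd2 := hd.trans heq
    push_cast
    linarith
  have hlim : Tendsto (fun i : ℕ => Real.log (stirlingSeq (i+1)) - 1/(12*((i:ℝ)+1)))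
      atTop (𝓝 (Real.log (Real.sqrt π))) := by
    have := bsb_tendsto_log.sub (by simpa using bsb_aux_tendsto 0 (by norm_num))
    simpa using this
  have := hmono.ge_of_tendsto hlim m
  linarith [this]

lemma bsb_robbins_lo (m : ℕ) : Real.log (Real.sqrt π) + 1/(12*((m:ℝ)+1)+1)
    ≤ Real.log (stirlingSeq (m+1)) := by
  have hmono : Antitone (fun i : ℕ => Real.log (stirlingSeq (i+1)) - 1/(12*((i:ℝ)+1)+1)) := by
    apply antitone_nat_of_succ_le
    intro i
    have hd := bsb_diff_ge i
    have hM : (0:ℝ) ≤ (i:ℝ) := Nat.cast_nonneg i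
    have ht : (1/(2*((i:ℝ)+1)+1))^2 * (2*((i:ℝ)+1)+1)^2 = 1 := by
      field_simp
    have heq : 1/(12*((i:ℝ)+1)+1) - 1/(12*((i:ℝ)+1+1)+1) ≤ (1/(2*((i:ℝ)+1)+1))^2 / 3 := by
      rw [div_sub_div _ _ (by positivity) (by positivity),
        div_le_div_iff₀ (by positivity) (by positivity)]
      nlinarith [ht, hM, sq_nonneg (1/(2*((i:ℝ)+1)+1))]
    have hd2 := heq.trans hd
    push_cast
    linarith
  have hlim : Tendsto (fun i : ℕ => Real.log (stirlingSeq (i+1)) - 1/(12*((i:ℝ)+1)+1))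
      atTop (𝓝 (Real.log (Real.sqrt π))) := by
    have := bsb_tendsto_log.sub (bsb_aux_tendsto 1 zero_le_one)
    simpa using this
  have := hmono.le_of_tendsto hlim m
  linarith [this]

lemma bsb_log_fact (m : ℕ) (hm : 1 ≤ m) :
    Real.log (m.factorial : ℝ) = Real.log (stirlingSeq m) + (1/2)*Real.log 2 + (1/2)*Real.log m
      + m * Real.log m - m := by
  have hm0 : (0:ℝ) < m := by exact_mod_cast hm
  have h := Stirling.log_stirlingSeq_formula m
  rw [Real.log_mul (by norm_num) hm0.ne', Real.log_div hm0.ne' (Real.exp_ne_zero 1),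
    Real.log_exp] at h
  have : (m:ℝ) * (Real.log m - 1) = m * Real.log m - m := by ring
  linarith [h, this]

lemma bsb_up (j : ℕ) (hj : 1 ≤ j) :
    Real.log (stirlingSeq j) ≤ Real.log (Real.sqrt π) + 1/(12*(j:ℝ)) := by
  obtain ⟨i, rfl⟩ : ∃ i, j = i + 1 := ⟨j - 1, by omega⟩
  have := bsb_robbins_up i
  push_cast
  push_cast at this
  linarith

lemma bsb_lo (j : ℕ) (hj : 1 ≤ j) :
    Real.log (Real.sqrt π) + 1/(12*(j:ℝ)+1) ≤ Real.log (stirlingSeq j) := by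
  obtain ⟨i, rfl⟩ : ∃ i, j = i + 1 := ⟨j - 1, by omega⟩
  have := bsb_robbins_lo i
  push_cast
  push_cast at this
  linarith

lemma bsb_num (N y : ℝ) (hN : 2 ≤ N) (hy1 : 1/(4*N) ≤ y) (hy2 : y ≤ 1/6) :
    1/(12*N) - 1/(12*N+1) < y^2/2 - y^3/6 - y^4*(5/96) := by
  have hN0 : (0:ℝ) < N := by linarith
  have hy0 : (0:ℝ) < y := lt_of_lt_of_le (by positivity) hy1
  have e1 : 1/(12*N) - 1/(12*N+1) ≤ 1/(144*N^2) := by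
    rw [div_sub_div _ _ (by positivity) (by positivity),
      div_le_div_iff₀ (by positivity) (by positivity)]
    nlinarith
  have hyn : 1 ≤ y*(4*N) := by
    rw [div_le_iff₀ (by positivity)] at hy1
    linarith
  have e2 : 1/(144*N^2) ≤ y^2/9 := by
    rw [div_le_div_iff₀ (by positivity) (by norm_num)]
    nlinarith [hyn, sq_nonneg (y*(4*N) - 1)]
  have hy3 : y^3 ≤ y^2 * (1/6) := by
    nlinarith [mul_nonneg (sub_nonneg.mpr hy2) (sq_nonneg y)]
  have hy4 : y^4 ≤ y^2 * (1/36) := by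
    nlinarith [sq_nonneg y, sq_nonneg (y - 1/6), mul_pos hy0 hy0]
  have hsq : (0:ℝ) < y^2 := by positivity
  nlinarith [e1, e2, hy3, hy4, hsq]


/-- Precise Stirling-type bounds for the central binomial coefficient:
for `p ∈ (0,1)` with `pn` an integer (`k = pn`),
`1 - (1 - p(1-p))/(12 p (1-p) n) < C(n,pn) / ( e^{nH(p)} / √(2π p (1-p) n) ) < 1`. -/
theorem binomial_stirling_bounds (n : ℕ) (hn : 1 ≤ n) (p : ℝ)
    (hp : 0 < p) (hp1 : p < 1) (k : ℕ) (hk : (k : ℝ) = p * n) :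
    1 - (1 - p * (1 - p)) / (12 * p * (1 - p) * n)
        < (n.choose k : ℝ) /
            (Real.exp ((n : ℝ) * (-p * Real.log p - (1 - p) * Real.log (1 - p)))
              / Real.sqrt (2 * π * p * (1 - p) * n))
      ∧ (n.choose k : ℝ) /
            (Real.exp ((n : ℝ) * (-p * Real.log p - (1 - p) * Real.log (1 - p)))
              / Real.sqrt (2 * π * p * (1 - p) * n))
          < 1 := by
  have hq : (0:ℝ) < 1 - p := by linarith
  have hn0 : (0:ℝ) < n := by exact_mod_cast hn
  have hk1 : 1 ≤ k := by
    rcases Nat.eq_zero_or_pos k with h | h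
    · exfalso
      rw [h] at hk
      norm_num at hk
      rcases hk with h' | h'
      · linarith
      · omega
    · exact h
  have hkn : k < n := by
    by_contra h
    push_neg at h
    have : (n:ℝ) ≤ k := by exact_mod_cast h
    nlinarith
  set m := n - k with hmdef
  have hm1 : 1 ≤ m := by omega
  have hkm : k + m = n := by omega
  have hkmr : (k:ℝ) + m = n := by exact_mod_cast hkm
  have hmr : (m:ℝ) = (1-p) * n := by rw [← hkmr] at hk ⊢; linarith
  have hk0 : (0:ℝ) < k := by exact_mod_cast hk1
  have hm0 : (0:ℝ) < m := by exact_mod_cast hm1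
  have hn2 : 2 ≤ n := by omega
  have hkf : (0:ℝ) < (k.factorial : ℝ) := by exact_mod_cast k.factorial_pos
  have hmf : (0:ℝ) < (m.factorial : ℝ) := by exact_mod_cast m.factorial_pos
  have hnf : (0:ℝ) < (n.factorial : ℝ) := by exact_mod_cast n.factorial_pos
  have hS : (0:ℝ) < Real.sqrt (2 * π * p * (1 - p) * n) :=
    Real.sqrt_pos.mpr (by positivity)
  have hC : (0:ℝ) < (n.choose k : ℝ) := by exact_mod_cast Nat.choose_pos hkn.le
  -- log identities
  have hlp : Real.log p = Real.log k - Real.log n := by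
    have hpkn : p = (k:ℝ)/n := by rw [hk]; field_simp
    rw [hpkn, Real.log_div hk0.ne' hn0.ne']
  have hlq : Real.log (1-p) = Real.log m - Real.log n := by
    have hpkn : (1-p) = (m:ℝ)/n := by rw [hmr]; field_simp
    rw [hpkn, Real.log_div hm0.ne' hn0.ne']
  have hchoose : (n.choose k : ℝ) = (n.factorial : ℝ) / ((k.factorial : ℝ) * (m.factorial : ℝ)) := by
    rw [eq_div_iff (by positivity), ← mul_assoc, hmdef]
    exact_mod_cast Nat.choose_mul_factorial_mul_factorial hkn.le
  have hlogC : Real.log (n.choose k : ℝ)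
      = Real.log (n.factorial : ℝ) - Real.log (k.factorial : ℝ) - Real.log (m.factorial : ℝ) := by
    rw [hchoose, Real.log_div hnf.ne' (by positivity), Real.log_mul hkf.ne' hmf.ne']
    ring
  have Fn := bsb_log_fact n (by omega)
  have Fk := bsb_log_fact k hk1
  have Fm := bsb_log_fact m hm1
  have hH : (n : ℝ) * (-p * Real.log p - (1 - p) * Real.log (1 - p))
      = (n:ℝ) * Real.log n - k * Real.log k - m * Real.log m := by
    rw [hlp, hlq]
    linear_combination Real.log k * hk + Real.log m * hmr
  have hlogS : Real.log (Real.sqrt (2*π*p*(1-p)*n))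
      = (1/2)*(Real.log 2 + Real.log π + Real.log p + Real.log (1-p) + Real.log n) := by
    rw [Real.log_sqrt (by positivity), Real.log_mul (by positivity) hn0.ne',
      Real.log_mul (by positivity) hq.ne', Real.log_mul (by positivity) hp.ne',
      Real.log_mul (by norm_num) (by positivity)]
    ring
  have hlsq : Real.log (Real.sqrt π) = (1/2) * Real.log π := by
    rw [Real.log_sqrt Real.pi_pos.le]; ring
  obtain ⟨x, hxdef⟩ : ∃ x : ℝ, x = (Real.log (stirlingSeq n) - Real.log (Real.sqrt π))
      - (Real.log (stirlingSeq k) - Real.log (Real.sqrt π))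
      - (Real.log (stirlingSeq m) - Real.log (Real.sqrt π)) := ⟨_, rfl⟩
  have hR0 : (0:ℝ) < (n.choose k : ℝ) /
      (Real.exp ((n : ℝ) * (-p * Real.log p - (1 - p) * Real.log (1 - p)))
        / Real.sqrt (2 * π * p * (1 - p) * n)) := by positivity
  have hlogR : Real.log ((n.choose k : ℝ) /
      (Real.exp ((n : ℝ) * (-p * Real.log p - (1 - p) * Real.log (1 - p)))
        / Real.sqrt (2 * π * p * (1 - p) * n))) = x := by
    rw [Real.log_div hC.ne' (by positivity),
      Real.log_div (Real.exp_ne_zero _) hS.ne', Real.log_exp, hlogC, Fn, Fk, Fm, hlogS, hxdef]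
    linarith [hH, hlsq, hkmr]
  have hRx : (n.choose k : ℝ) /
      (Real.exp ((n : ℝ) * (-p * Real.log p - (1 - p) * Real.log (1 - p)))
        / Real.sqrt (2 * π * p * (1 - p) * n)) = Real.exp x := by
    rw [← hlogR, Real.exp_log hR0]
  -- Robbins bounds
  have hun := bsb_up n (by omega)
  have huk := bsb_up k hk1
  have hum := bsb_up m hm1
  have hln := bsb_lo n (by omega)
  have hlk := bsb_lo k hk1
  have hlm := bsb_lo m hm1
  rw [hRx]
  constructor
  · -- lower bound
    obtain ⟨y, hydef⟩ : ∃ y : ℝ,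
        y = (1/(12*(k:ℝ)) + 1/(12*(m:ℝ))) - 1/(12*(n:ℝ)+1) := ⟨_, rfl⟩
    have hxlo : -y ≤ x := by rw [hydef, hxdef]; linarith
    have hkm2 : (k:ℝ)*m ≤ (n:ℝ)^2/4 := by nlinarith [sq_nonneg ((k:ℝ) - m)]
    have hkm3 : (n:ℝ) - 1 ≤ (k:ℝ)*m := by nlinarith [mul_nonneg (sub_nonneg.mpr (by exact_mod_cast hk1 : (1:ℝ) ≤ k)) (sub_nonneg.mpr (by exact_mod_cast hm1 : (1:ℝ) ≤ m))]
    have hueq : 1/(12*(k:ℝ)) + 1/(12*(m:ℝ)) = (n:ℝ)/(12*((k:ℝ)*m)) := by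
      rw [div_add_div _ _ (by positivity) (by positivity), div_eq_div_iff (by positivity) (by positivity)]
      linear_combination (144*(k:ℝ)*m) * hkmr
    have hu1 : 1/(3*(n:ℝ)) ≤ (n:ℝ)/(12*((k:ℝ)*m)) := by
      rw [div_le_div_iff₀ (by positivity) (by positivity)]
      linarith [hkm2]
    have hu2 : (n:ℝ)/(12*((k:ℝ)*m)) ≤ 1/6 := by
      rw [div_le_div_iff₀ (by positivity) (by norm_num)]
      have hn2r : (2:ℝ) ≤ n := by exact_mod_cast hn2
      linarith [hkm3, hn2r]
    have hsub : 1/(3*(n:ℝ)) - 1/(12*(n:ℝ)) = 1/(4*(n:ℝ)) := by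
      field_simp
      ring
    have hs1 : 1/(12*(n:ℝ)+1) ≤ 1/(12*(n:ℝ)) :=
      one_div_le_one_div_of_le (by positivity) (by linarith)
    have hs0 : (0:ℝ) < 1/(12*(n:ℝ)+1) := by positivity
    have hy1 : 1/(4*(n:ℝ)) ≤ y := by rw [hydef, hueq]; linarith
    have hy2 : y ≤ 1/6 := by rw [hydef, hueq]; linarith
    have hy0 : (0:ℝ) < y := lt_of_lt_of_le (by positivity) hy1
    -- exp bound
    have habs : |(-y)| ≤ 1 := by rw [abs_neg, abs_of_pos hy0]; linarith
    have hEb := Real.exp_bound habs (by norm_num : 0 < 4)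
    have hsum : ∑ i ∈ Finset.range 4, (-y)^i / (i.factorial : ℝ)
        = 1 - y + y^2/2 - y^3/6 := by
      simp [Finset.sum_range_succ, Nat.factorial]
      ring
    rw [hsum] at hEb
    have habs4 : |(-y)|^4 * ((4:ℕ).succ / ((4:ℕ).factorial * (4:ℕ)))
        = y^4 * (5/96) := by
      rw [abs_neg, abs_of_pos hy0]
      norm_num [Nat.factorial]
    rw [habs4] at hEb
    have hexp1 : 1 - y + y^2/2 - y^3/6 - y^4*(5/96) ≤ Real.exp (-y) := by
      have := abs_le.mp hEb
      linarith [this.1]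
    have hexp2 : Real.exp (-y) ≤ Real.exp x := Real.exp_le_exp.mpr hxlo
    -- RHS rewriting
    have hpq : p*(1-p) = (k:ℝ)*m/(n:ℝ)^2 := by
      rw [eq_div_iff (by positivity)]
      linear_combination (-(m:ℝ)) * hk + (-(p*(n:ℝ))) * hmr
    have hueq2 : (n:ℝ)/(12*((k:ℝ)*m)) = 1/(12*p*(1-p)*(n:ℝ)) := by
      rw [div_eq_div_iff (by positivity) (by positivity)]
      linear_combination (-12*(m:ℝ))*hk + (-12*p*(n:ℝ))*hmr
    have hgoal : 1 - (1 - p * (1 - p)) / (12 * p * (1 - p) * (n:ℝ))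
        = 1 + 1/(12*(n:ℝ)) - (n:ℝ)/(12*((k:ℝ)*m)) := by
      rw [hueq2]
      field_simp
      ring
    rw [hgoal]
    have hn2r : (2:ℝ) ≤ n := by exact_mod_cast hn2
    have hnum := bsb_num (n:ℝ) y hn2r hy1 hy2
    have hyu : (n:ℝ)/(12*((k:ℝ)*m)) = y + 1/(12*(n:ℝ)+1) := by rw [hydef, hueq]; ring
    rw [hyu]
    linarith [hexp1, hexp2, hnum]
  · -- upper bound
    have hknr : (k:ℝ) + 1 ≤ n := by exact_mod_cast hkn
    have h1 : 1/(12*(n:ℝ)) < 1/(12*(k:ℝ)+1) := by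
      apply one_div_lt_one_div_of_lt (by positivity)
      linarith
    have h2 : (0:ℝ) < 1/(12*(m:ℝ)+1) := by positivity
    have hx0 : x < 0 := by rw [hxdef]; linarith
    exact Real.exp_lt_one_iff.mpr hx0
end

section
/- As n → ∞, the sum ∑_{k=0}^{3g-1} C(6g, 2k+1)/C(3g-1, k) is asymptotically equivalent to 2^{3g+1} · 3 · √(π/12) · √g; equivalently, ∑_{k=0}^{3g-1} C(6g,2k+1)/C(3g-1,k) ~ √3 · 2^{5g} · (g!)² / (2g)! as g → ∞. -/
open Real Filter Finset

namespace SumRatioBinomials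

open Nat MeasureTheory intervalIntegral

/-! ### Combinatorial layer -/

lemma df_odd (k : ℕ) : (2*k+1)‼ * (2^k * k !) = (2*k+1)! := by
  have h := Nat.factorial_eq_mul_doubleFactorial (2*k)
  rw [← Nat.doubleFactorial_two_mul]
  omega

lemma df_pos (n : ℕ) : (0:ℝ) < (n‼ : ℝ) := by exact_mod_cast Nat.doubleFactorial_pos n

lemma df_succ_odd (k : ℕ) : ((2*k+1)‼ : ℝ) = (2*(k:ℝ)+1) * ((2*k-1)‼ : ℝ) := by
  cases k with
  | zero => norm_num
  | succ k =>
      have h1 : 2*(k+1)+1 = (2*k+1)+2 := by ring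
      rw [h1, Nat.doubleFactorial_add_two]
      have h2 : 2*(k+1)-1 = 2*k+1 := by omega
      rw [h2]
      push_cast; ring

noncomputable def Pd (n : ℕ) : ℝ :=
  ∑ k ∈ range n, 1/(((2*k+1)‼ : ℝ) * ((2*(n-1-k)+1)‼ : ℝ))

noncomputable def Q (n : ℕ) : ℝ :=
  ∑ m ∈ range n, 2^m * (m ! : ℝ)^2 / ((2*m+1)! : ℝ)

lemma aux_frac (a c x y : ℝ) (hx : x ≠ 0) (hy : y ≠ 0) (ha : a ≠ 0) (hc : c ≠ 0) :
    (a+c) * (1/((a*x)*(c*y))) = 1/(x*(c*y)) + 1/((a*x)*y) := by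
  field_simp

lemma Prec (m : ℕ) : ((m:ℝ)+1) * Pd (m+1) = Pd m + 1/((2*m+1)‼ : ℝ) := by
  have key : (2*(m:ℝ)+2) * Pd (m+1) = 2 * Pd m + 2 * (1/((2*m+1)‼ : ℝ)) := by
    set b : ℕ → ℝ := fun k => 1/(((2*k-1)‼ : ℝ) * ((2*(m+1-k)-1)‼ : ℝ)) with hb
    have step : ∀ k ∈ range (m+1),
        (2*(m:ℝ)+2) * (1/(((2*k+1)‼ : ℝ) * ((2*((m+1)-1-k)+1)‼ : ℝ))) = b k + b (k+1) := by
      intro k hk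
      rw [mem_range] at hk
      have hkm : k ≤ m := by omega
      have e1 : (m+1)-1-k = m-k := by omega
      have e2 : 2*(m+1-k)-1 = 2*(m-k)+1 := by omega
      have e3 : 2*(m+1-(k+1))-1 = 2*(m-k)-1 := by omega
      have e4 : 2*(k+1)-1 = 2*k+1 := by omega
      rw [e1, hb]
      simp only [e2, e3, e4]
      rw [df_succ_odd k, df_succ_odd (m-k)]
      have h2 : (2*(m:ℝ)+2) = (2*(k:ℝ)+1) + (2*((m-k:ℕ):ℝ)+1) := by
        have h3 : ((m-k:ℕ):ℝ) = (m:ℝ) - k := by push_cast [Nat.cast_sub hkm]; ring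
        rw [h3]; ring
      rw [h2]
      exact aux_frac _ _ _ _ (df_pos _).ne' (df_pos _).ne'
        (by positivity) (by positivity)
    have hsum : (2*(m:ℝ)+2) * Pd (m+1) = ∑ k ∈ range (m+1), (b k + b (k+1)) := by
      rw [Pd, mul_sum]
      exact Finset.sum_congr rfl step
    have hA : ∑ k ∈ range (m+2), b k = (∑ k ∈ range (m+1), b k) + b (m+1) :=
      sum_range_succ _ _
    have hB : ∑ k ∈ range (m+2), b k = (∑ k ∈ range (m+1), b (k+1)) + b 0 :=
      sum_range_succ' _ _
    have hC : ∑ k ∈ range (m+1), b (k+1) = (∑ k ∈ range m, b (k+1)) + b (m+1) :=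
      sum_range_succ _ _
    have hPm : Pd m = ∑ k ∈ range m, b (k+1) := by
      rw [Pd]
      refine Finset.sum_congr rfl ?_
      intro k hk
      rw [mem_range] at hk
      rw [hb]
      have e4 : 2*(k+1)-1 = 2*k+1 := by omega
      have e5 : 2*(m+1-(k+1))-1 = 2*(m-1-k)+1 := by omega
      simp only [e4, e5]
    have hb0 : b 0 = 1/((2*m+1)‼ : ℝ) := by
      rw [hb]
      have e6 : 2*0-1 = 0 := by omega
      have e7 : 2*(m+1-0)-1 = 2*m+1 := by omega
      simp only [e6, e7]
      norm_num
    have hbm : b (m+1) = 1/((2*m+1)‼ : ℝ) := by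
      rw [hb]
      have e4 : 2*(m+1)-1 = 2*m+1 := by omega
      have e5 : 2*(m+1-(m+1))-1 = 0 := by omega
      simp only [e4, e5]
      norm_num
    rw [hsum, sum_add_distrib]
    linarith [hA, hB, hC, hPm, hb0, hbm]
  linear_combination key / 2

lemma PQ (n : ℕ) : (n ! : ℝ) * Pd n = Q n := by
  induction n with
  | zero => simp [Pd, Q]
  | succ n ih =>
      have h1 : ((n+1)! : ℝ) = ((n:ℝ)+1) * (n ! : ℝ) := by
        rw [Nat.factorial_succ]; push_cast; ring
      rw [h1, Q, sum_range_succ, ← Q, ← ih]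
      have h2 : ((n:ℝ)+1) * Pd (n+1) = Pd n + 1/((2*n+1)‼ : ℝ) := Prec n
      have h3 : (n ! : ℝ) * (1/((2*n+1)‼ : ℝ)) = 2^n * (n ! : ℝ)^2 / ((2*n+1)! : ℝ) := by
        have hd : ((2*n+1)‼ : ℝ) * (2^n * (n ! : ℝ)) = ((2*n+1)! : ℝ) := by
          exact_mod_cast congrArg (fun x : ℕ => (x : ℝ)) (df_odd n)
        rw [← hd]
        have p1 : (0:ℝ) < ((2*n+1)‼ : ℝ) := df_pos _
        have p2 : (0:ℝ) < (n ! : ℝ) := by exact_mod_cast Nat.factorial_pos n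
        field_simp
      calc ((n:ℝ)+1) * (n ! : ℝ) * Pd (n+1) = (n ! : ℝ) * (((n:ℝ)+1) * Pd (n+1)) := by ring
        _ = (n ! : ℝ) * (Pd n + 1/((2*n+1)‼ : ℝ)) := by rw [h2]
        _ = (n ! : ℝ) * Pd n + 2^n * (n ! : ℝ)^2 / ((2*n+1)! : ℝ) := by rw [mul_add, h3]

lemma key_nat (k j : ℕ) :
    (2*(k+j+1)).choose (2*k+1) * ((2*k+1)‼ * (2^k * k !)) * ((2*j+1)‼ * (2^j * j !))
      = (2*(k+j+1))! := by
  rw [df_odd, df_odd]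
  have h : 2*k+1 ≤ 2*(k+j+1) := by omega
  have h2 : 2*(k+j+1) - (2*k+1) = 2*j+1 := by omega
  have h3 := Nat.choose_mul_factorial_mul_factorial h
  rw [h2] at h3
  exact h3

lemma key_nat2 (m k : ℕ) (hk : k ≤ m) :
    (2*(m+1)).choose (2*k+1) * (2^m * m !) * ((2*k+1)‼ * (2*(m-k)+1)‼)
      = (2*(m+1))! * m.choose k := by
  have h1 := key_nat k (m-k)
  rw [show k+(m-k)+1 = m+1 from by omega] at h1
  have h2 := Nat.choose_mul_factorial_mul_factorial hk
  have h3 : 2^m = 2^k * 2^(m-k) := by rw [← pow_add]; congr 1; omega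
  calc (2*(m+1)).choose (2*k+1) * (2^m * m !) * ((2*k+1)‼ * (2*(m-k)+1)‼)
      = m.choose k *
        ((2*(m+1)).choose (2*k+1) * ((2*k+1)‼ * (2^k * k !)) * ((2*(m-k)+1)‼ * (2^(m-k) * (m-k)!)))
        := by rw [h3, ← h2]; ring
    _ = (2*(m+1))! * m.choose k := by rw [h1]; ring

lemma term_eq (m k : ℕ) (hk : k ≤ m) :
    ((2*(m+1)).choose (2*k+1) : ℝ) / (m.choose k : ℝ)
      = ((2*(m+1))! : ℝ) / (2^m * (m ! : ℝ)) *
          (1/(((2*k+1)‼ : ℝ) * ((2*(m-k)+1)‼ : ℝ))) := by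
  have hc : (0:ℝ) < (m.choose k : ℝ) := by exact_mod_cast Nat.choose_pos hk
  have hm : (0:ℝ) < (m ! : ℝ) := by exact_mod_cast Nat.factorial_pos m
  have h1 : (0:ℝ) < ((2*k+1)‼ : ℝ) := df_pos _
  have h2 : (0:ℝ) < ((2*(m-k)+1)‼ : ℝ) := df_pos _
  have hcast : ((2*(m+1)).choose (2*k+1) : ℝ) * (2^m * (m ! : ℝ)) *
      (((2*k+1)‼ : ℝ) * ((2*(m-k)+1)‼ : ℝ)) = ((2*(m+1))! : ℝ) * (m.choose k : ℝ) := by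
    exact_mod_cast congrArg (fun x : ℕ => (x : ℝ)) (key_nat2 m k hk)
  have hp : (0:ℝ) < (2:ℝ)^m := by positivity
  field_simp
  linear_combination hcast

lemma sum_closed (g : ℕ) (hg : 1 ≤ g) :
    (∑ k ∈ range (3*g), (((6*g).choose (2*k+1) : ℝ) / ((3*g-1).choose k : ℝ)))
    = 6*(g:ℝ) * ((6*g)! : ℝ) * Q (3*g) / (2^(3*g) * ((3*g)! : ℝ)^2) := by
  obtain ⟨m, hm⟩ : ∃ m, 3*g = m+1 := ⟨3*g-1, by omega⟩
  have h2 : 6*g = 2*(m+1) := by omega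
  have h3 : 3*g-1 = m := by omega
  have hG6 : 6*(g:ℝ) = 2*((m:ℝ)+1) := by
    have h4 : ((3*g : ℕ) : ℝ) = ((m+1 : ℕ) : ℝ) := by rw [hm]
    push_cast at h4
    linarith
  rw [h2, h3, hm, hG6]
  have hsum : ∑ k ∈ range (m+1), (((2*(m+1)).choose (2*k+1) : ℝ) / (m.choose k : ℝ))
      = ((2*(m+1))! : ℝ) / (2^m * (m ! : ℝ)) * Pd (m+1) := by
    rw [Pd, mul_sum]
    refine Finset.sum_congr rfl (fun k hk => ?_)
    rw [Finset.mem_range] at hk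
    rw [show (m+1)-1-k = m-k from by omega]
    exact term_eq m k (by omega)
  rw [hsum]
  have hfp : (0:ℝ) < ((m+1)! : ℝ) := by exact_mod_cast Nat.factorial_pos (m+1)
  have hPd : Pd (m+1) = Q (m+1) / ((m+1)! : ℝ) := by
    rw [eq_div_iff hfp.ne', mul_comm, PQ]
  rw [hPd]
  have hfm : ((m+1)! : ℝ) = ((m:ℝ)+1) * (m ! : ℝ) := by
    rw [Nat.factorial_succ]; push_cast; ring
  rw [hfm]
  have hm1 : (0:ℝ) < (m:ℝ)+1 := by positivity
  have hmf : (0:ℝ) < (m ! : ℝ) := by exact_mod_cast Nat.factorial_pos m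
  have hp2 : (0:ℝ) < (2:ℝ)^m := by positivity
  rw [pow_succ]
  field_simp

/-! ### Integral evaluation of `Q` -/

lemma beta_nat (b : ℕ) : ∀ a : ℕ, ∫ x in (0:ℝ)..1, x^a * (1-x)^b
    = (a ! : ℝ) * (b ! : ℝ) / ((a+b+1)! : ℝ) := by
  induction b with
  | zero =>
      intro a
      simp only [pow_zero, mul_one, integral_pow, one_pow, Nat.factorial_zero, Nat.cast_one,
        Nat.add_zero]
      rw [show a+0+1 = a+1 from by omega, Nat.factorial_succ]
      push_cast
      rw [zero_pow (by omega : a+1 ≠ 0)]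
      have h : ((a:ℝ)+1) ≠ 0 := by positivity
      field_simp
      norm_num
  | succ b ih =>
      intro a
      have hder : ∀ x ∈ Set.uIcc (0:ℝ) 1, HasDerivAt (fun x : ℝ => x^(a+1) * (1-x)^(b+1))
          (((a:ℝ)+1)*x^a*(1-x)^(b+1) - ((b:ℝ)+1)*x^(a+1)*(1-x)^b) x := by
        intro x _
        have h1 : HasDerivAt (fun x:ℝ => x^(a+1)) (((a:ℝ)+1)*x^a) x := by
          simpa using hasDerivAt_pow (a+1) x
        have h2 : HasDerivAt (fun x:ℝ => (1-x)^(b+1)) (-(((b:ℝ)+1)*(1-x)^b)) x := by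
          have h3 := (hasDerivAt_pow (b+1) (1-x)).comp x ((hasDerivAt_id x).const_sub 1)
          simpa [Function.comp_def] using h3
        have h4 := h1.mul h2
        refine h4.congr_deriv ?_
        ring
      have hint : IntervalIntegrable
          (fun x : ℝ => ((a:ℝ)+1)*x^a*(1-x)^(b+1) - ((b:ℝ)+1)*x^(a+1)*(1-x)^b)
          volume 0 1 := (Continuous.intervalIntegrable (by fun_prop) 0 1)
      have hFTC := intervalIntegral.integral_eq_sub_of_hasDerivAt hder hint
      have hi1 : IntervalIntegrable (fun x : ℝ => x^a*(1-x)^(b+1)) volume 0 1 :=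
        (Continuous.intervalIntegrable (by fun_prop) 0 1)
      have hi2 : IntervalIntegrable (fun x : ℝ => x^(a+1)*(1-x)^b) volume 0 1 :=
        (Continuous.intervalIntegrable (by fun_prop) 0 1)
      have hsplit : (∫ x in (0:ℝ)..1, (((a:ℝ)+1)*x^a*(1-x)^(b+1) - ((b:ℝ)+1)*x^(a+1)*(1-x)^b))
          = ((a:ℝ)+1) * (∫ x in (0:ℝ)..1, x^a*(1-x)^(b+1))
            - ((b:ℝ)+1) * (∫ x in (0:ℝ)..1, x^(a+1)*(1-x)^b) := by
        have e1 : ∀ x : ℝ, ((a:ℝ)+1)*x^a*(1-x)^(b+1) - ((b:ℝ)+1)*x^(a+1)*(1-x)^b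
            = ((a:ℝ)+1)*(x^a*(1-x)^(b+1)) - ((b:ℝ)+1)*(x^(a+1)*(1-x)^b) := by
          intro x; ring
        simp_rw [e1]
        rw [intervalIntegral.integral_sub (hi1.const_mul _) (hi2.const_mul _),
          intervalIntegral.integral_const_mul, intervalIntegral.integral_const_mul]
      rw [hsplit] at hFTC
      have hz : (1:ℝ)^(a+1) * (1-1)^(b+1) - (0:ℝ)^(a+1) * (1-0)^(b+1) = 0 := by
        rw [zero_pow (by omega : a+1 ≠ 0)]; norm_num
      rw [hz] at hFTC
      have heq : ((a:ℝ)+1) * (∫ x in (0:ℝ)..1, x^a*(1-x)^(b+1))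
          = ((b:ℝ)+1) * (((a+1)! : ℝ) * (b ! : ℝ) / ((a+(b+1)+1)! : ℝ)) := by
        rw [show a+(b+1)+1 = (a+1)+b+1 from by omega, ← ih (a+1)]; linarith [hFTC]
      have ha1 : (0:ℝ) < ((a:ℝ)+1) := by positivity
      have hfa : ((a+1)! : ℝ) = ((a:ℝ)+1) * (a ! : ℝ) := by
        rw [Nat.factorial_succ]; push_cast; ring
      have hfb : ((b+1)! : ℝ) = ((b:ℝ)+1) * (b ! : ℝ) := by
        rw [Nat.factorial_succ]; push_cast; ring
      have hfpos : (0:ℝ) < ((a+(b+1)+1)! : ℝ) := by exact_mod_cast Nat.factorial_pos _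
      rw [hfa] at heq
      rw [hfb]
      refine mul_left_cancel₀ ha1.ne' ?_
      rw [heq]
      field_simp

lemma r_lt (x : ℝ) : (0:ℝ) < 1 - 2*x*(1-x) := by nlinarith [sq_nonneg (2*x-1)]

lemma r_mem {x : ℝ} (hx : x ∈ Set.Icc (0:ℝ) 1) : 0 ≤ 2*x*(1-x) ∧ 2*x*(1-x) ≤ 1/2 := by
  obtain ⟨h0, h1⟩ := hx
  constructor
  · nlinarith
  · nlinarith [sq_nonneg (2*x-1)]

lemma Qint (n : ℕ) : Q n = ∫ x in (0:ℝ)..1, (∑ m ∈ range n, (2*x*(1-x))^m) := by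
  rw [intervalIntegral.integral_finset_sum (fun m _ =>
    (Continuous.intervalIntegrable (by fun_prop) 0 1))]
  rw [Q]
  refine Finset.sum_congr rfl (fun m _ => ?_)
  have h1 : ∀ x : ℝ, (2*x*(1-x))^m = 2^m * (x^m * (1-x)^m) := by
    intro x; rw [mul_pow, mul_pow]; ring
  simp_rw [h1]
  rw [intervalIntegral.integral_const_mul, beta_nat m m]
  rw [show m+m+1 = 2*m+1 from by omega]
  rw [sq]
  ring

lemma geo (n : ℕ) (x : ℝ) : (∑ m ∈ range n, (2*x*(1-x))^m)
    = (1 - (2*x*(1-x))^n) / (1 - 2*x*(1-x)) := by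
  have h := r_lt x
  rw [geom_sum_eq (by intro hc; rw [hc] at h; norm_num at h)]
  rw [div_eq_div_iff (by intro hc; nlinarith) (by linarith)]
  ring

lemma arct : (∫ x in (0:ℝ)..1, (1 - 2*x*(1-x))⁻¹) = π/2 := by
  have h1 : ∀ x : ℝ, (1 - 2*x*(1-x))⁻¹ = (fun y : ℝ => 2*(1+y^2)⁻¹) (2*x + (-1)) := by
    intro x
    simp only
    have h2 : (1 + (2*x + (-1))^2) ≠ 0 := by positivity
    have h3 := (r_lt x).ne'
    field_simp
    ring
  simp_rw [h1]
  rw [intervalIntegral.integral_comp_mul_add (fun y : ℝ => 2*(1+y^2)⁻¹) two_ne_zero (-1)]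
  norm_num
  ring

lemma Qtend : Filter.Tendsto Q atTop (nhds (π/2)) := by
  have key : ∀ n : ℕ, |Q n - π/2| ≤ 2 * (1/2)^n := by
    intro n
    have hsplit : Q n - π/2 = - ∫ x in (0:ℝ)..1, (2*x*(1-x))^n / (1 - 2*x*(1-x)) := by
      have hi1 : IntervalIntegrable (fun x : ℝ => (1 - 2*x*(1-x))⁻¹) volume 0 1 :=
        (Continuous.intervalIntegrable (by
          apply Continuous.inv₀ (by fun_prop)
          intro x; exact (r_lt x).ne') 0 1)
      have hi2 : IntervalIntegrable (fun x : ℝ => (2*x*(1-x))^n / (1 - 2*x*(1-x))) volume 0 1 :=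
        (Continuous.intervalIntegrable (by
          apply Continuous.div (by fun_prop) (by fun_prop)
          intro x; exact (r_lt x).ne') 0 1)
      have he : ∀ x : ℝ, (1 - (2*x*(1-x))^n) / (1 - 2*x*(1-x))
          = (1 - 2*x*(1-x))⁻¹ - (2*x*(1-x))^n / (1 - 2*x*(1-x)) := by
        intro x
        have h4 := r_lt x
        field_simp
      rw [Qint n]
      simp_rw [geo n, he]
      rw [intervalIntegral.integral_sub hi1 hi2, arct]
      ring
    rw [hsplit, abs_neg]
    have hb := intervalIntegral.norm_integral_le_of_norm_le_const
      (C := 2 * (1/2)^n) (f := fun x : ℝ => (2*x*(1-x))^n / (1 - 2*x*(1-x)))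
      (a := 0) (b := 1) ?_
    · simpa using hb
    · intro x hx
      rw [Set.uIoc_of_le (by norm_num : (0:ℝ) ≤ 1)] at hx
      have hx' : x ∈ Set.Icc (0:ℝ) 1 := ⟨le_of_lt hx.1, hx.2⟩
      obtain ⟨h0, hhalf⟩ := r_mem hx'
      have hd := r_lt x
      have hd2 : (1:ℝ)/2 ≤ 1 - 2*x*(1-x) := by linarith
      rw [Real.norm_eq_abs, abs_div, abs_of_nonneg (pow_nonneg h0 n), abs_of_pos hd]
      have h3 : (2*x*(1-x))^n ≤ (1/2)^n := pow_le_pow_left₀ h0 hhalf n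
      calc (2*x*(1-x))^n / (1 - 2*x*(1-x)) ≤ (1/2)^n / (1/2) := by
            apply div_le_div₀ (by positivity) h3 (by norm_num) hd2
        _ = 2 * (1/2)^n := by ring
  have h0 : Filter.Tendsto (fun n : ℕ => 2 * (1/2 : ℝ)^n) atTop (nhds 0) := by
    have h5 := tendsto_pow_atTop_nhds_zero_of_lt_one (by norm_num : (0:ℝ) ≤ 1/2) (by norm_num)
    simpa using h5.const_mul 2
  have h6 : Filter.Tendsto (fun n => Q n - π/2) atTop (nhds 0) :=
    squeeze_zero_norm (fun n => key n) h0
  have h7 := h6.add_const (π/2)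
  simpa using h7

/-! ### Stirling layer -/

lemma Qpos (n : ℕ) (hn : 1 ≤ n) : 0 < Q n := by
  rw [Q]
  apply Finset.sum_pos
  · intro m _
    have h1 : (0:ℝ) < (m ! : ℝ) := by exact_mod_cast Nat.factorial_pos m
    have h2 : (0:ℝ) < ((2*m+1)! : ℝ) := by exact_mod_cast Nat.factorial_pos (2*m+1)
    positivity
  · exact Finset.nonempty_range_iff.mpr (by omega)

lemma spos (n : ℕ) (hn : 1 ≤ n) : 0 < Stirling.stirlingSeq n := by
  have h := Stirling.stirlingSeq'_pos (n-1)
  rwa [Nat.sub_add_cancel hn] at h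

lemma fact_eq (n : ℕ) (hn : 1 ≤ n) :
    (n ! : ℝ) = Stirling.stirlingSeq n * (Real.sqrt (2*n) * ((n:ℝ)/Real.exp 1)^n) := by
  have hn' : (0:ℝ) < n := by exact_mod_cast hn
  have hpos : (0:ℝ) < Real.sqrt (2*(n:ℝ)) * (((n:ℝ))/Real.exp 1)^n := by positivity
  rw [Stirling.stirlingSeq]
  field_simp

lemma fact_sq (n : ℕ) (hn : 1 ≤ n) :
    ((n ! : ℝ))^2 = (Stirling.stirlingSeq n)^2 * (2*(n:ℝ)) * ((((n:ℝ))/Real.exp 1)^n)^2 := by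
  have hn' : (0:ℝ) < n := by exact_mod_cast hn
  rw [fact_eq n hn]
  rw [mul_pow, mul_pow, Real.sq_sqrt (by positivity)]
  ring

lemma ratio2_eq (g : ℕ) (hg : 1 ≤ g) :
    (6*(g:ℝ) * ((6*g)! : ℝ) * Q (3*g) / (2^(3*g) * ((3*g)! : ℝ)^2)) /
      (Real.sqrt 3 * (2:ℝ)^(5*g) * ((g ! : ℝ))^2 / ((2*g)! : ℝ))
    = 2 * Stirling.stirlingSeq (6*g) * Stirling.stirlingSeq (2*g) * Q (3*g)
        / (Stirling.stirlingSeq (3*g)^2 * Stirling.stirlingSeq g^2) := by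
  set E : ℝ := Real.exp 1 with hE
  have hEpos : 0 < E := Real.exp_pos 1
  have hG : (0:ℝ) < (g:ℝ) := by exact_mod_cast hg
  have hs6 := spos (6*g) (by omega)
  have hs3 := spos (3*g) (by omega)
  have hs2 := spos (2*g) (by omega)
  have hs1 := spos g hg
  have hQ := Qpos (3*g) (by omega)
  have hF6 : (0:ℝ) < ((6*g)! : ℝ) := by exact_mod_cast Nat.factorial_pos (6*g)
  have hF3 : (0:ℝ) < ((3*g)! : ℝ) := by exact_mod_cast Nat.factorial_pos (3*g)
  have hF2 : (0:ℝ) < ((2*g)! : ℝ) := by exact_mod_cast Nat.factorial_pos (2*g)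
  have hF1 : (0:ℝ) < ((g)! : ℝ) := by exact_mod_cast Nat.factorial_pos g
  have hs3' : (0:ℝ) < Real.sqrt 3 := by positivity
  have hLpos : 0 < (6*(g:ℝ) * ((6*g)! : ℝ) * Q (3*g) / (2^(3*g) * ((3*g)! : ℝ)^2)) /
      (Real.sqrt 3 * (2:ℝ)^(5*g) * ((g ! : ℝ))^2 / ((2*g)! : ℝ)) := by positivity
  have hRpos : 0 < 2 * Stirling.stirlingSeq (6*g) * Stirling.stirlingSeq (2*g) * Q (3*g)
        / (Stirling.stirlingSeq (3*g)^2 * Stirling.stirlingSeq g^2) := by positivity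
  have e6 := fact_sq (6*g) (by omega)
  have e3 := fact_sq (3*g) (by omega)
  have e2 := fact_sq (2*g) (by omega)
  have e1 := fact_sq g hg
  push_cast at e6 e3 e2 e1
  have hW6 : ((6*(g:ℝ))/E)^(6*g) = 2^(6*g)*3^(6*g)*(g:ℝ)^(6*g)/E^(6*g) := by
    rw [div_pow, show (6:ℝ)*(g:ℝ) = 2*3*(g:ℝ) from by ring, mul_pow, mul_pow]
  have hW3 : ((3*(g:ℝ))/E)^(3*g) = 3^(3*g)*(g:ℝ)^(3*g)/E^(3*g) := by
    rw [div_pow, mul_pow]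
  have hW2 : ((2*(g:ℝ))/E)^(2*g) = 2^(2*g)*(g:ℝ)^(2*g)/E^(2*g) := by
    rw [div_pow, mul_pow]
  have hW1 : (((g:ℝ))/E)^g = (g:ℝ)^g/E^g := by rw [div_pow]
  rw [hW6] at e6
  rw [hW3] at e3
  rw [hW2] at e2
  rw [hW1] at e1
  have hsq : ((6*(g:ℝ) * ((6*g)! : ℝ) * Q (3*g) / (2^(3*g) * ((3*g)! : ℝ)^2)) /
      (Real.sqrt 3 * (2:ℝ)^(5*g) * ((g ! : ℝ))^2 / ((2*g)! : ℝ)))^2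
      = (2 * Stirling.stirlingSeq (6*g) * Stirling.stirlingSeq (2*g) * Q (3*g)
        / (Stirling.stirlingSeq (3*g)^2 * Stirling.stirlingSeq g^2))^2 := by
    have expand : ((6*(g:ℝ) * ((6*g)! : ℝ) * Q (3*g) / (2^(3*g) * ((3*g)! : ℝ)^2)) /
        (Real.sqrt 3 * (2:ℝ)^(5*g) * ((g ! : ℝ))^2 / ((2*g)! : ℝ)))^2
        = (6*(g:ℝ))^2 * (((6*g)! : ℝ))^2 * (Q (3*g))^2 * (((2*g)! : ℝ))^2 /
          ((2:ℝ)^(6*g) * ((((3*g)! : ℝ))^2)^2 * ((Real.sqrt 3)^2 * (2:ℝ)^(10*g)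
            * (((g)! : ℝ)^2)^2)) := by
      field_simp
      ring
    rw [expand, Real.sq_sqrt (by norm_num : (3:ℝ) ≥ 0), e6, e3, e2, e1]
    field_simp
    ring
  calc (6*(g:ℝ) * ((6*g)! : ℝ) * Q (3*g) / (2^(3*g) * ((3*g)! : ℝ)^2)) /
      (Real.sqrt 3 * (2:ℝ)^(5*g) * ((g ! : ℝ))^2 / ((2*g)! : ℝ))
      = Real.sqrt ((( 6*(g:ℝ) * ((6*g)! : ℝ) * Q (3*g) / (2^(3*g) * ((3*g)! : ℝ)^2)) /
      (Real.sqrt 3 * (2:ℝ)^(5*g) * ((g ! : ℝ))^2 / ((2*g)! : ℝ)))^2) :=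
        (Real.sqrt_sq hLpos.le).symm
    _ = Real.sqrt ((2 * Stirling.stirlingSeq (6*g) * Stirling.stirlingSeq (2*g) * Q (3*g)
        / (Stirling.stirlingSeq (3*g)^2 * Stirling.stirlingSeq g^2))^2) := by rw [hsq]
    _ = _ := Real.sqrt_sq hRpos.le

lemma ratioT_eq (g : ℕ) (hg : 1 ≤ g) :
    (Real.sqrt 3 * (2:ℝ)^(5*g) * ((g ! : ℝ))^2 / ((2*g)! : ℝ)) /
      ((2:ℝ)^(3*g+1) * 3 * Real.sqrt (π/12) * Real.sqrt g)
    = Real.sqrt 3 * Stirling.stirlingSeq g^2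
        / (6 * Stirling.stirlingSeq (2*g) * Real.sqrt (π/12)) := by
  set E : ℝ := Real.exp 1 with hE
  have hEpos : 0 < E := Real.exp_pos 1
  have hG : (0:ℝ) < (g:ℝ) := by exact_mod_cast hg
  have hs2 := spos (2*g) (by omega)
  have hs1 := spos g hg
  have hF2 : (0:ℝ) < ((2*g)! : ℝ) := by exact_mod_cast Nat.factorial_pos (2*g)
  have hF1 : (0:ℝ) < ((g)! : ℝ) := by exact_mod_cast Nat.factorial_pos g
  have hs3' : (0:ℝ) < Real.sqrt 3 := by positivity
  have hpi : (0:ℝ) < π/12 := by positivity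
  have hsp : (0:ℝ) < Real.sqrt (π/12) := Real.sqrt_pos.mpr hpi
  have hsg : (0:ℝ) < Real.sqrt g := Real.sqrt_pos.mpr hG
  have hLpos : 0 < (Real.sqrt 3 * (2:ℝ)^(5*g) * ((g ! : ℝ))^2 / ((2*g)! : ℝ)) /
      ((2:ℝ)^(3*g+1) * 3 * Real.sqrt (π/12) * Real.sqrt g) := by positivity
  have hRpos : 0 < Real.sqrt 3 * Stirling.stirlingSeq g^2
        / (6 * Stirling.stirlingSeq (2*g) * Real.sqrt (π/12)) := by positivity
  have e2 := fact_sq (2*g) (by omega)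
  have e1 := fact_sq g hg
  push_cast at e2 e1
  have hW2 : ((2*(g:ℝ))/E)^(2*g) = 2^(2*g)*(g:ℝ)^(2*g)/E^(2*g) := by
    rw [div_pow, mul_pow]
  have hW1 : (((g:ℝ))/E)^g = (g:ℝ)^g/E^g := by rw [div_pow]
  rw [hW2] at e2
  rw [hW1] at e1
  have sq3 : (Real.sqrt 3)^2 = 3 := Real.sq_sqrt (by norm_num)
  have sq12 : (Real.sqrt 12)^2 = 12 := Real.sq_sqrt (by norm_num)
  have sqpi : (Real.sqrt π)^2 = π := Real.sq_sqrt Real.pi_pos.le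
  have sqg : (Real.sqrt (g:ℝ))^2 = (g:ℝ) := Real.sq_sqrt hG.le
  have hsq : ((Real.sqrt 3 * (2:ℝ)^(5*g) * ((g ! : ℝ))^2 / ((2*g)! : ℝ)) /
      ((2:ℝ)^(3*g+1) * 3 * Real.sqrt (π/12) * Real.sqrt g))^2
      = (Real.sqrt 3 * Stirling.stirlingSeq g^2
        / (6 * Stirling.stirlingSeq (2*g) * Real.sqrt (π/12)))^2 := by
    have expand : ((Real.sqrt 3 * (2:ℝ)^(5*g) * ((g ! : ℝ))^2 / ((2*g)! : ℝ)) /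
        ((2:ℝ)^(3*g+1) * 3 * Real.sqrt (π/12) * Real.sqrt g))^2
        = (Real.sqrt 3)^2 * (2:ℝ)^(10*g) * (((g)! : ℝ)^2)^2 /
          ((((2*g)! : ℝ))^2 * (((2:ℝ)^(3*g+1))^2 * 9 * (Real.sqrt (π/12))^2
            * (Real.sqrt g)^2)) := by
      field_simp
      ring
    have expandR : (Real.sqrt 3 * Stirling.stirlingSeq g^2
        / (6 * Stirling.stirlingSeq (2*g) * Real.sqrt (π/12)))^2
        = (Real.sqrt 3)^2 * (Stirling.stirlingSeq g^2)^2 /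
          (36 * (Stirling.stirlingSeq (2*g))^2 * (Real.sqrt (π/12))^2) := by
      field_simp
      ring
    rw [expand, expandR, Real.sq_sqrt (by norm_num : (3:ℝ) ≥ 0),
      Real.sq_sqrt hpi.le, Real.sq_sqrt hG.le, e2, e1]
    rw [pow_succ]
    field_simp
    ring
  calc (Real.sqrt 3 * (2:ℝ)^(5*g) * ((g ! : ℝ))^2 / ((2*g)! : ℝ)) /
      ((2:ℝ)^(3*g+1) * 3 * Real.sqrt (π/12) * Real.sqrt g)
      = Real.sqrt (((Real.sqrt 3 * (2:ℝ)^(5*g) * ((g ! : ℝ))^2 / ((2*g)! : ℝ)) /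
      ((2:ℝ)^(3*g+1) * 3 * Real.sqrt (π/12) * Real.sqrt g))^2) :=
        (Real.sqrt_sq hLpos.le).symm
    _ = Real.sqrt ((Real.sqrt 3 * Stirling.stirlingSeq g^2
        / (6 * Stirling.stirlingSeq (2*g) * Real.sqrt (π/12)))^2) := by rw [hsq]
    _ = _ := Real.sqrt_sq hRpos.le

lemma tendsto_comp_mul (c : ℕ) (hc : 1 ≤ c) :
    Filter.Tendsto (fun g : ℕ => Stirling.stirlingSeq (c*g)) atTop (nhds (Real.sqrt π)) := by
  refine Stirling.tendsto_stirlingSeq_sqrt_pi.comp ?_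
  refine tendsto_atTop_mono (fun g => ?_) tendsto_id
  simpa using Nat.le_mul_of_pos_left g (by omega : 0 < c)

lemma tendsto_Q3 : Filter.Tendsto (fun g : ℕ => Q (3*g)) atTop (nhds (π/2)) := by
  refine Qtend.comp ?_
  refine tendsto_atTop_mono (fun g => ?_) tendsto_id
  simpa using Nat.le_mul_of_pos_left g (by omega : 0 < 3)

lemma tendsto_R2 : Filter.Tendsto (fun g : ℕ =>
    2 * Stirling.stirlingSeq (6*g) * Stirling.stirlingSeq (2*g) * Q (3*g)
      / (Stirling.stirlingSeq (3*g)^2 * Stirling.stirlingSeq g^2)) atTop (nhds 1) := by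
  have h6 := tendsto_comp_mul 6 (by norm_num)
  have h3 := tendsto_comp_mul 3 (by norm_num)
  have h2 := tendsto_comp_mul 2 (by norm_num)
  have h1 : Filter.Tendsto (fun g : ℕ => Stirling.stirlingSeq g) atTop (nhds (Real.sqrt π)) :=
    Stirling.tendsto_stirlingSeq_sqrt_pi
  have hnum : Filter.Tendsto (fun g : ℕ =>
      2 * Stirling.stirlingSeq (6*g) * Stirling.stirlingSeq (2*g) * Q (3*g)) atTop
      (nhds (2 * Real.sqrt π * Real.sqrt π * (π/2))) :=
    (((tendsto_const_nhds.mul h6).mul h2).mul tendsto_Q3)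
  have hden : Filter.Tendsto (fun g : ℕ =>
      Stirling.stirlingSeq (3*g)^2 * Stirling.stirlingSeq g^2) atTop
      (nhds ((Real.sqrt π)^2 * (Real.sqrt π)^2)) :=
    ((h3.pow 2).mul (h1.pow 2))
  have hne : ((Real.sqrt π)^2 * (Real.sqrt π)^2) ≠ 0 := by
    rw [Real.sq_sqrt Real.pi_pos.le]
    positivity
  have := hnum.div hden hne
  convert this using 2
  · rfl
  rw [Real.sq_sqrt Real.pi_pos.le]
  rw [show 2 * Real.sqrt π * Real.sqrt π * (π/2) = (Real.sqrt π * Real.sqrt π) * π from by ring,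
    Real.mul_self_sqrt Real.pi_pos.le]
  field_simp

lemma limT_eq_one :
    Real.sqrt 3 * (Real.sqrt π)^2 / (6 * Real.sqrt π * Real.sqrt (π/12)) = 1 := by
  have hpi := Real.pi_pos
  have h2 : (0:ℝ) < Real.sqrt π := Real.sqrt_pos.mpr hpi
  have h3 : (0:ℝ) < Real.sqrt (π/12) := Real.sqrt_pos.mpr (by positivity)
  have sq3 : (Real.sqrt 3)^2 = 3 := Real.sq_sqrt (by norm_num)
  have sq12 : (Real.sqrt 12)^2 = 12 := Real.sq_sqrt (by norm_num)
  have sqpi : (Real.sqrt π)^2 = π := Real.sq_sqrt hpi.le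
  have sqpi12 : (Real.sqrt (π/12))^2 = π/12 := Real.sq_sqrt (by positivity)
  have sqpi4 : (Real.sqrt π)^4 = π^2 := by
    rw [show (4:ℕ) = 2*2 from rfl, pow_mul, sqpi]
  have hL : 0 < Real.sqrt 3 * (Real.sqrt π)^2 / (6 * Real.sqrt π * Real.sqrt (π/12)) := by
    positivity
  have hsq : (Real.sqrt 3 * (Real.sqrt π)^2 / (6 * Real.sqrt π * Real.sqrt (π/12)))^2 = 1 := by
    rw [div_pow]
    rw [div_eq_one_iff_eq (by positivity)]
    simp only [mul_pow, sq3, sq12, sqpi, sqpi12, sqpi4]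
    ring
  calc Real.sqrt 3 * (Real.sqrt π)^2 / (6 * Real.sqrt π * Real.sqrt (π/12))
      = Real.sqrt ((Real.sqrt 3 * (Real.sqrt π)^2 / (6 * Real.sqrt π * Real.sqrt (π/12)))^2) :=
        (Real.sqrt_sq hL.le).symm
    _ = Real.sqrt 1 := by rw [hsq]
    _ = 1 := Real.sqrt_one

lemma tendsto_T : Filter.Tendsto (fun g : ℕ =>
    Real.sqrt 3 * Stirling.stirlingSeq g^2
      / (6 * Stirling.stirlingSeq (2*g) * Real.sqrt (π/12))) atTop (nhds 1) := by
  have h2 := tendsto_comp_mul 2 (by norm_num)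
  have h1 : Filter.Tendsto (fun g : ℕ => Stirling.stirlingSeq g) atTop (nhds (Real.sqrt π)) :=
    Stirling.tendsto_stirlingSeq_sqrt_pi
  have hnum : Filter.Tendsto (fun g : ℕ => Real.sqrt 3 * Stirling.stirlingSeq g^2) atTop
      (nhds (Real.sqrt 3 * (Real.sqrt π)^2)) := tendsto_const_nhds.mul (h1.pow 2)
  have hden : Filter.Tendsto (fun g : ℕ =>
      6 * Stirling.stirlingSeq (2*g) * Real.sqrt (π/12)) atTop
      (nhds (6 * Real.sqrt π * Real.sqrt (π/12))) :=
    (tendsto_const_nhds.mul h2).mul tendsto_const_nhds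
  have hne : (6 * Real.sqrt π * Real.sqrt (π/12)) ≠ 0 := by
    have hpi := Real.pi_pos
    have hx : (0:ℝ) < Real.sqrt π := Real.sqrt_pos.mpr hpi
    have hy : (0:ℝ) < Real.sqrt (π/12) := Real.sqrt_pos.mpr (by positivity)
    positivity
  have := hnum.div hden hne
  rwa [limT_eq_one] at this

end SumRatioBinomials

open SumRatioBinomials in
/-- `∑_{k=0}^{3g-1} C(6g,2k+1)/C(3g-1,k) ~ 2^{3g+1}·3·√(π/12)·√g`, equivalently
`~ √3 · 2^{5g} · (g!)² / (2g)!`, as `g → ∞`. -/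
theorem sum_ratio_binomials_asymptotics :
    Filter.Tendsto (fun g : ℕ =>
        (∑ k ∈ Finset.range (3 * g), (((6 * g).choose (2 * k + 1) : ℝ) /
            ((3 * g - 1).choose k))) /
          ((2 : ℝ) ^ (3 * g + 1) * 3 * Real.sqrt (π / 12) * Real.sqrt g))
      Filter.atTop (nhds 1)
    ∧ Filter.Tendsto (fun g : ℕ =>
        (∑ k ∈ Finset.range (3 * g), (((6 * g).choose (2 * k + 1) : ℝ) /
            ((3 * g - 1).choose k))) /
          (Real.sqrt 3 * (2 : ℝ) ^ (5 * g) * ((g.factorial : ℝ)) ^ 2 /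
            ((2 * g).factorial : ℝ)))
      Filter.atTop (nhds 1) := by
  have h2comp : Filter.Tendsto (fun g : ℕ =>
      (∑ k ∈ Finset.range (3 * g), (((6 * g).choose (2 * k + 1) : ℝ) /
          ((3 * g - 1).choose k))) /
        (Real.sqrt 3 * (2 : ℝ) ^ (5 * g) * ((g.factorial : ℝ)) ^ 2 /
          ((2 * g).factorial : ℝ)))
      Filter.atTop (nhds 1) := by
    refine tendsto_R2.congr' ?_
    filter_upwards [eventually_ge_atTop 1] with g hg
    rw [sum_closed g hg, ratio2_eq g hg]
  refine ⟨?_, h2comp⟩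
  have hprod := h2comp.mul tendsto_T
  rw [mul_one] at hprod
  refine hprod.congr' ?_
  filter_upwards [eventually_ge_atTop 1] with g hg
  rw [← ratioT_eq g hg]
  have hden2 : (Real.sqrt 3 * (2 : ℝ) ^ (5 * g) * ((g.factorial : ℝ)) ^ 2 /
      ((2 * g).factorial : ℝ)) ≠ 0 := by
    have hF2 : (0:ℝ) < ((2 * g).factorial : ℝ) := by exact_mod_cast Nat.factorial_pos (2*g)
    have hF1 : (0:ℝ) < ((g.factorial : ℝ)) := by exact_mod_cast Nat.factorial_pos g
    have hs3' : (0:ℝ) < Real.sqrt 3 := by positivity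
    positivity
  rw [div_mul_div_comm, mul_comm (Real.sqrt 3 * (2 : ℝ) ^ (5 * g) * ((g.factorial : ℝ)) ^ 2 /
      ((2 * g).factorial : ℝ)) ((2 : ℝ) ^ (3 * g + 1) * 3 * Real.sqrt (π / 12) * Real.sqrt g),
    mul_div_mul_right _ _ hden2]
end
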